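/- Let r, s > 0 be real numbers with rs > 1. Then for every nonzero u ∈ C_c^∞(ℝ,ℂ), both ⟨u, (r p² − (pq + qp) + s q²) u⟩ > 0 and ⟨u, (r p² + (pq + qp) + s q²) u⟩ > 0; i.e. the quadratic forms of the operators r p² ∓ (pq+qp) + s q² are strictly positive on C_c^∞(ℝ,ℂ). -/

import Mathlib

open MeasureTheory Complex
open scoped ComplexOrder

noncomputable section

/-- Operators acting on complex-valued functions on `ℝ`. -/
abbrev Op : Type := (ℝ → ℂ) → (ℝ → ℂ)

/-- The momentum operator `(p u)(x) = -i u'(x)`. -/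
def pOp : Op := fun u x => -Complex.I * deriv u x

/-- The position operator `(q u)(x) = x * u(x)`. -/
def qOp : Op := fun u x => (x : ℂ) * u x

/-- Multiplication operator by a real-valued function. -/
def mulOp (f : ℝ → ℝ) : Op := fun u x => (f x : ℂ) * u x

/-- Commutator of two operators. -/
def opComm (A B : Op) : Op := fun u => A (B u) - B (A u)

/-- Anticommutator of two operators. -/
def opACom (A B : Op) : Op := fun u => A (B u) + B (A u)

/-- The `L²(ℝ,ℂ)` inner product, antilinear in the first argument. -/
def ip (u v : ℝ → ℂ) : ℂ := ∫ x : ℝ, (starRingEnd ℂ) (u x) * v x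

/-- `u ∈ C_c^∞(ℝ,ℂ)`: smooth and compactly supported. -/
def IsTest (u : ℝ → ℂ) : Prop := ContDiff ℝ (⊤ : ℕ∞) u ∧ HasCompactSupport u

lemma integral_deriv_zero' (f : ℝ → ℂ) (hf : ContDiff ℝ 1 f) (hc : HasCompactSupport f) :
    ∫ x : ℝ, deriv f x = 0 := by
  have hint : Integrable (deriv f) :=
    (hf.continuous_deriv le_rfl).integrable_of_hasCompactSupport hc.deriv
  rw [← setIntegral_univ, ← Set.Iic_union_Ioi (a := (0:ℝ)),
    setIntegral_union (Set.Iic_disjoint_Ioi le_rfl) measurableSet_Ioi hint.integrableOn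
      hint.integrableOn,
    HasCompactSupport.integral_Iic_deriv_eq hf hc, HasCompactSupport.integral_Ioi_deriv_eq hf hc]
  ring

lemma hasDerivAt_zero_integral (F g : ℝ → ℂ) (hF : ContDiff ℝ 1 F) (hc : HasCompactSupport F)
    (h : ∀ x, HasDerivAt F (g x) x) : ∫ x : ℝ, g x = 0 := by
  have hg : g = deriv F := funext fun x => ((h x).deriv).symm
  rw [hg]; exact integral_deriv_zero' F hF hc

lemma quad_aux (r s : ℝ) (hr : 0 < r) (hs : 0 < s) (hrs : 1 < r * s)
    (u : ℝ → ℂ) (hu : IsTest u) (hu0 : u ≠ 0) (ε : ℝ) (hε : ε = 1 ∨ ε = -1) :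
    0 < ip u (fun x => (r:ℂ) * pOp (pOp u) x + (ε:ℂ) * opACom pOp qOp u x
      + (s:ℂ) * qOp (qOp u) x) := by
  obtain ⟨hsm, hcs⟩ := hu
  have hd1 : Differentiable ℝ u := hsm.differentiable (by simp)
  have hsm' : ContDiff ℝ (⊤ : ℕ∞) (deriv u) := (contDiff_infty_iff_deriv.mp hsm).2
  have hd2 : Differentiable ℝ (deriv u) := hsm'.differentiable (by simp)
  have hcu : Continuous u := hsm.continuous
  have hcu' : Continuous (deriv u) := hsm'.continuous
  have hcu'' : Continuous (deriv (deriv u)) := (contDiff_infty_iff_deriv.mp hsm').2.continuous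
  have hstarC : ContDiff ℝ (⊤ : ℕ∞) (fun x => (starRingEnd ℂ) (u x)) :=
    Complex.conjCLE.toContinuousLinearMap.contDiff.comp hsm
  -- generic compact support builder
  have hK : ∀ {α : Type} [inst : AddCommMonoid α] [inst2 : TopologicalSpace α] (F : ℝ → α),
      (∀ x, u x = 0 → deriv u x = 0 → F x = 0) → HasCompactSupport F := by
    intro α _ _ F hF
    apply HasCompactSupport.intro (hcs.union hcs.deriv)
    intro x hx
    exact hF x (image_eq_zero_of_notMem_tsupport fun h => hx (Or.inl h))
      (image_eq_zero_of_notMem_tsupport fun h => hx (Or.inr h))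
  -- pointwise operator computations
  have hqq : ∀ x, qOp (qOp u) x = (x:ℂ)^2 * u x := by
    intro x; simp only [qOp]; ring
  have hpp : ∀ x, pOp (pOp u) x = -(deriv (deriv u) x) := by
    intro x
    have h1 : pOp u = fun z => -Complex.I * deriv u z := rfl
    simp only [pOp, h1]
    rw [deriv_const_mul _ (hd2 x)]
    linear_combination (deriv (deriv u) x) * Complex.I_sq
  have hofReal : ∀ x : ℝ, HasDerivAt (fun y : ℝ => (y:ℂ)) 1 x := by
    intro x; simpa using (hasDerivAt_id x).ofReal_comp
  have hmul : ∀ x, HasDerivAt (fun y : ℝ => (y:ℂ) * u y) (u x + x * deriv u x) x := by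
    intro x
    exact ((hofReal x).mul (hd1 x).hasDerivAt).congr_deriv (by simp)
  have hacom : ∀ x, opACom pOp qOp u x
      = -Complex.I * u x - 2 * Complex.I * x * deriv u x := by
    intro x
    have h1 : qOp u = fun y : ℝ => (y:ℂ) * u y := rfl
    simp only [opACom, Pi.add_apply, pOp, qOp, h1]
    rw [(hmul x).deriv]
    ring
  have hstar : ∀ x, HasDerivAt (fun y => (starRingEnd ℂ) (u y))
      ((starRingEnd ℂ) (deriv u x)) x := fun x => ((hd1 x).hasDerivAt).star
  -- the two integration-by-parts identities
  set D1 : ℝ → ℂ := fun x => (starRingEnd ℂ) (deriv u x) * deriv u x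
      + (starRingEnd ℂ) (u x) * deriv (deriv u) x with hD1def
  set D2 : ℝ → ℂ := fun x => (starRingEnd ℂ) (u x) * u x
      + (x:ℂ) * ((starRingEnd ℂ) (deriv u x) * u x + (starRingEnd ℂ) (u x) * deriv u x)
      with hD2def
  have hE1 : ∫ x : ℝ, D1 x = 0 := by
    apply hasDerivAt_zero_integral (fun x => (starRingEnd ℂ) (u x) * deriv u x) D1
      ((hstarC.mul hsm').of_le (by exact_mod_cast le_top))
      (hK _ (by intro x h1 h2; simp [h1, h2]))
    intro x
    exact (hstar x).mul (hd2 x).hasDerivAt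
  have hE2 : ∫ x : ℝ, D2 x = 0 := by
    apply hasDerivAt_zero_integral
      (fun x => (x:ℂ) * ((starRingEnd ℂ) (u x) * u x)) D2
      ((Complex.ofRealCLM.contDiff.mul (hstarC.mul hsm)).of_le (by exact_mod_cast le_top))
      (hK _ (by intro x h1 _; simp [h1]))
    intro x
    have := (hofReal x).mul ((hstar x).mul (hd1 x).hasDerivAt)
    exact this.congr_deriv (by simp only [hD2def, Pi.mul_apply]; ring)
  -- the real-valued integrand
  set f : ℝ → ℝ := fun x => r * Complex.normSq (deriv u x)
      + ε * (2 * x * ((starRingEnd ℂ) (u x) * deriv u x).im)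
      + s * (x^2 * Complex.normSq (u x)) with hfdef
  -- pointwise identity
  have hpt : ∀ x, (starRingEnd ℂ) (u x) * ((r:ℂ) * pOp (pOp u) x
      + (ε:ℂ) * opACom pOp qOp u x + (s:ℂ) * qOp (qOp u) x)
      = ((f x : ℝ) : ℂ) + (-(r:ℂ)) * D1 x + (-(ε:ℂ) * Complex.I) * D2 x := by
    intro x
    rw [hpp, hacom, hqq]
    simp only [hfdef, hD1def, hD2def]
    apply Complex.ext <;> simp [Complex.normSq_apply] <;> ring
  -- integrability facts
  have hintf : Integrable f := by
    apply Continuous.integrable_of_hasCompactSupport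
    · apply Continuous.add
      apply Continuous.add
      · exact continuous_const.mul (Complex.continuous_normSq.comp hcu')
      · exact continuous_const.mul ((continuous_const.mul continuous_id).mul
          (Complex.continuous_im.comp ((Complex.continuous_conj.comp hcu).mul hcu')))
      · exact continuous_const.mul ((continuous_pow 2).mul
          (Complex.continuous_normSq.comp hcu))
    · exact hK _ (by intro x h1 h2; simp [hfdef, h1, h2])
  have hintD1 : Integrable D1 := by
    apply Continuous.integrable_of_hasCompactSupport
    · exact ((Complex.continuous_conj.comp hcu').mul hcu').add
        ((Complex.continuous_conj.comp hcu).mul hcu'')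
    · exact hK _ (by intro x h1 h2; simp [hD1def, h1, h2])
  have hintD2 : Integrable D2 := by
    apply Continuous.integrable_of_hasCompactSupport
    · exact ((Complex.continuous_conj.comp hcu).mul hcu).add
        (Complex.continuous_ofReal.mul
          (((Complex.continuous_conj.comp hcu').mul hcu).add
            ((Complex.continuous_conj.comp hcu).mul hcu')))
    · exact hK _ (by intro x h1 h2; simp [hD2def, h1, h2])
  have hintfC : Integrable (fun x => ((f x : ℝ) : ℂ)) := hintf.ofReal
  -- compute the inner product
  have hipeq : ip u (fun x => (r:ℂ) * pOp (pOp u) x + (ε:ℂ) * opACom pOp qOp u x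
      + (s:ℂ) * qOp (qOp u) x) = (((∫ x : ℝ, f x) : ℝ) : ℂ) := by
    unfold ip
    have : (fun x : ℝ => (starRingEnd ℂ) (u x) * ((r:ℂ) * pOp (pOp u) x
        + (ε:ℂ) * opACom pOp qOp u x + (s:ℂ) * qOp (qOp u) x))
        = fun x => ((f x : ℝ) : ℂ) + (-(r:ℂ)) * D1 x + (-(ε:ℂ) * Complex.I) * D2 x :=
      funext hpt
    rw [this]
    have i1 : Integrable (fun x : ℝ => ((f x : ℝ) : ℂ) + (-(r:ℂ)) * D1 x) :=
      hintfC.add (hintD1.const_mul _)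
    have i2 : Integrable (fun x : ℝ => (-(ε:ℂ) * Complex.I) * D2 x) := hintD2.const_mul _
    have hofR : ∫ x : ℝ, ((f x : ℝ) : ℂ) = (((∫ x : ℝ, f x) : ℝ) : ℂ) := integral_ofReal
    rw [integral_add i1 i2, integral_add hintfC (hintD1.const_mul _),
      MeasureTheory.integral_const_mul, MeasureTheory.integral_const_mul, hE1, hE2, hofR]
    ring
  rw [hipeq]
  rw [Complex.zero_lt_real]
  -- positivity of the real integral
  set c : ℝ := (1/r + s)/2 with hcdef
  have hrs' : 1/r < s := by
    rw [div_lt_iff₀ hr]; nlinarith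
  have hc1 : 1/r < c := by rw [hcdef]; linarith
  have hc2 : c < s := by rw [hcdef]; linarith
  have hc0 : 0 < c := lt_trans (by positivity) hc1
  have hrc : 1/c < r := by
    rw [div_lt_iff₀ hc0]
    rw [div_lt_iff₀ hr] at hc1
    linarith [mul_comm r c]
  set h : ℝ → ℝ := fun x => (r - 1/c) * Complex.normSq (deriv u x)
      + (s - c) * (x^2 * Complex.normSq (u x)) with hhdef
  have hh_nonneg : ∀ x, 0 ≤ h x := by
    intro x
    have := Complex.normSq_nonneg (deriv u x)
    have := Complex.normSq_nonneg (u x)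
    have hx2 : (0:ℝ) ≤ x^2 := sq_nonneg x
    have h1 : 0 ≤ r - 1/c := by linarith
    have h2 : 0 ≤ s - c := by linarith
    positivity
  have hfh : ∀ x, h x ≤ f x := by
    intro x
    set a := ‖u x‖ with hadef
    set b := ‖deriv u x‖ with hbdef
    have ha0 : 0 ≤ a := norm_nonneg _
    have hb0 : 0 ≤ b := norm_nonneg _
    have hsa : Complex.normSq (u x) = a^2 := (Complex.sq_norm _).symm
    have hsb : Complex.normSq (deriv u x) = b^2 := (Complex.sq_norm _).symm
    have htle : |((starRingEnd ℂ) (u x) * deriv u x).im| ≤ a * b := by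
      calc |((starRingEnd ℂ) (u x) * deriv u x).im|
          ≤ ‖(starRingEnd ℂ) (u x) * deriv u x‖ := Complex.abs_im_le_norm _
        _ = a * b := by rw [norm_mul, Complex.norm_conj]
    have hεt : -(2 * |x| * (a * b)) ≤ ε * (2 * x * ((starRingEnd ℂ) (u x) * deriv u x).im) := by
      have hεabs : |ε| = 1 := by rcases hε with h | h <;> simp [h]
      have habs : |ε * (2 * x * ((starRingEnd ℂ) (u x) * deriv u x).im)|
          ≤ 2 * |x| * (a * b) := by
        rw [abs_mul, hεabs, one_mul, abs_mul, abs_mul, _root_.abs_two]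
        calc 2 * |x| * |((starRingEnd ℂ) (u x) * deriv u x).im|
            ≤ 2 * |x| * (a * b) := by gcongr
          _ = 2 * |x| * (a * b) := by ring
      linarith [neg_abs_le (ε * (2 * x * ((starRingEnd ℂ) (u x) * deriv u x).im))]
    have key2 : 2 * (|x| * (a * b)) ≤ c * (|x|^2 * a^2) + (1/c) * b^2 := by
      have hid : c * (|x|^2 * a^2) + (1/c) * b^2 - 2 * (|x| * (a * b))
          = (1/c) * (c * |x| * a - b)^2 := by
        field_simp
        ring
      have hnn : (0:ℝ) ≤ (1/c) * (c * |x| * a - b)^2 := by positivity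
      linarith
    have hx2 : x^2 = |x|^2 := (_root_.sq_abs x).symm
    simp only [hhdef, hfdef, hsa, hsb]
    rw [hx2]
    linarith [key2, hεt]
  have hinth : Integrable h := by
    apply Continuous.integrable_of_hasCompactSupport
    · exact (continuous_const.mul (Complex.continuous_normSq.comp hcu')).add
        (continuous_const.mul ((continuous_pow 2).mul (Complex.continuous_normSq.comp hcu)))
    · exact hK _ (by intro x h1 h2; simp [hhdef, h1, h2])
  -- find a point where deriv u ≠ 0
  have hex : ∃ x₀, deriv u x₀ ≠ 0 := by
    by_contra hcon
    push_neg at hcon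
    have hconst := is_const_of_deriv_eq_zero hd1 hcon
    have hne : (tsupport u) ≠ Set.univ := hcs.ne_univ
    obtain ⟨y, hy⟩ := Set.ne_univ_iff_exists_notMem _ |>.mp hne
    have hy0 : u y = 0 := image_eq_zero_of_notMem_tsupport hy
    apply hu0
    funext x
    rw [hconst x y, hy0]; rfl
  obtain ⟨x₀, hx₀⟩ := hex
  have hhx₀ : 0 < h x₀ := by
    have h1 : 0 < Complex.normSq (deriv u x₀) := Complex.normSq_pos.mpr hx₀
    have h2 : 0 < r - 1/c := by linarith
    have h3 : 0 ≤ (s - c) * (x₀^2 * Complex.normSq (u x₀)) := by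
      have := Complex.normSq_nonneg (u x₀)
      have h4 : 0 ≤ s - c := by linarith
      positivity
    simp only [hhdef]
    nlinarith
  have hhcont : Continuous h := by
    exact (continuous_const.mul (Complex.continuous_normSq.comp hcu')).add
      (continuous_const.mul ((continuous_pow 2).mul (Complex.continuous_normSq.comp hcu)))
  have hpos : 0 < ∫ x : ℝ, h x := by
    rw [integral_pos_iff_support_of_nonneg hh_nonneg hinth]
    have hU : IsOpen {x | 0 < h x} := isOpen_lt continuous_const hhcont
    have hsub : {x | 0 < h x} ⊆ Function.support h := fun x hx => ne_of_gt hx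
    calc (0 : ENNReal) < volume {x | 0 < h x} := hU.measure_pos volume ⟨x₀, hhx₀⟩
      _ ≤ volume (Function.support h) := measure_mono hsub
  calc (0:ℝ) < ∫ x : ℝ, h x := hpos
    _ ≤ ∫ x : ℝ, f x := integral_mono hinth hintf hfh

/-- for `r, s > 0` with `rs > 1` the quadratic forms of
`r p² ∓ (pq+qp) + s q²` are strictly positive on `C_c^∞(ℝ,ℂ)` (complex order on `ℂ`). -/
theorem quadratic_form_strictly_positive (r s : ℝ) (hr : 0 < r) (hs : 0 < s)
    (hrs : 1 < r * s) (u : ℝ → ℂ) (hu : IsTest u) (hu0 : u ≠ 0) :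
    0 < ip u (((r : ℂ) • (pOp ∘ pOp) - opACom pOp qOp + (s : ℂ) • (qOp ∘ qOp)) u)
    ∧ 0 < ip u (((r : ℂ) • (pOp ∘ pOp) + opACom pOp qOp + (s : ℂ) • (qOp ∘ qOp)) u) := by
  constructor
  · have key := quad_aux r s hr hs hrs u hu hu0 (-1) (Or.inr rfl)
    have heq : (((r : ℂ) • (pOp ∘ pOp) - opACom pOp qOp + (s : ℂ) • (qOp ∘ qOp)) u)
        = fun x => (r:ℂ) * pOp (pOp u) x + (((-1:ℝ)):ℂ) * opACom pOp qOp u x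
          + (s:ℂ) * qOp (qOp u) x := by
      funext x
      simp only [Pi.add_apply, Pi.sub_apply, Pi.smul_apply, Function.comp_apply,
        smul_eq_mul]
      push_cast
      ring
    rw [heq]; exact key
  · have key := quad_aux r s hr hs hrs u hu hu0 1 (Or.inl rfl)
    have heq : (((r : ℂ) • (pOp ∘ pOp) + opACom pOp qOp + (s : ℂ) • (qOp ∘ qOp)) u)
        = fun x => (r:ℂ) * pOp (pOp u) x + (((1:ℝ)):ℂ) * opACom pOp qOp u x
          + (s:ℂ) * qOp (qOp u) x := by
      funext x
      simp only [Pi.add_apply, Pi.sub_apply, Pi.smul_apply, Function.comp_apply,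
        smul_eq_mul]
      push_cast
      ring
    rw [heq]; exact key
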